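/- Let H, K, N be pairwise permutable subgroups of a finite group G (i.e., HK = KH, HN = NH, KN = NK), and suppose H is a Hall subgroup of G (i.e., gcd(|H|, |G:H|) = 1). Then N ∩ HK = (N ∩ H)(N ∩ K). -/

import Mathlib

open scoped Pointwise

section Helpers

variable {G : Type*} [Group G]

/-- If two subgroups permute, the carrier of their sup is the set product. -/
theorem coe_sup_of_comm (S T : Subgroup G)
    (h : (S : Set G) * (T : Set G) = (T : Set G) * (S : Set G)) :
    ((S ⊔ T : Subgroup G) : Set G) = (S : Set G) * (T : Set G) := by
  let P : Subgroup G :=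
    { carrier := (S : Set G) * (T : Set G)
      one_mem' := ⟨1, S.one_mem, 1, T.one_mem, mul_one 1⟩
      mul_mem' := by
        rintro x y ⟨s₁, hs₁, t₁, ht₁, rfl⟩ ⟨s₂, hs₂, t₂, ht₂, rfl⟩
        have : t₁ * s₂ ∈ (S : Set G) * (T : Set G) := by
          rw [h]; exact ⟨t₁, ht₁, s₂, hs₂, rfl⟩
        obtain ⟨s₃, hs₃, t₃, ht₃, hst⟩ := this
        refine ⟨s₁ * s₃, S.mul_mem hs₁ hs₃, t₃ * t₂, T.mul_mem ht₃ ht₂, ?_⟩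
        rw [show s₁ * t₁ * (s₂ * t₂) = s₁ * (t₁ * s₂) * t₂ by group, ← hst]
        group
      inv_mem' := by
        rintro x ⟨s, hs, t, ht, rfl⟩
        show (s * t)⁻¹ ∈ (S : Set G) * (T : Set G)
        rw [h]
        exact ⟨t⁻¹, T.inv_mem ht, s⁻¹, S.inv_mem hs, (mul_inv_rev s t).symm⟩ }
  have hPe : S ⊔ T = P := by
    apply le_antisymm
    · exact sup_le (fun x hx => ⟨x, hx, 1, T.one_mem, mul_one x⟩)
        (fun x hx => ⟨1, S.one_mem, x, hx, one_mul x⟩)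
    · rintro x ⟨s, hs, t, ht, rfl⟩
      exact mul_mem (le_sup_left (α := Subgroup G) hs) (le_sup_right (α := Subgroup G) ht)
  rw [hPe]; rfl

/-- Cardinality of the image of a subgroup in a quotient. -/
theorem card_image_mk (A B : Subgroup G) :
    Nat.card ((QuotientGroup.mk '' (A : Set G)) : Set (G ⧸ B)) = B.relIndex A := by
  rw [Subgroup.relIndex, Subgroup.index_eq_card]
  apply (Nat.card_congr _).symm
  refine Equiv.ofBijective
    (fun q => Quotient.liftOn' q
      (fun a => (⟨QuotientGroup.mk (a : G), ⟨(a : G), a.2, rfl⟩⟩ :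
        (QuotientGroup.mk '' (A : Set G) : Set (G ⧸ B))))
      ?_) ⟨?_, ?_⟩
  · intro a b hab
    rw [QuotientGroup.leftRel_apply, Subgroup.mem_subgroupOf] at hab
    exact Subtype.ext (QuotientGroup.eq.mpr hab)
  · intro q₁ q₂
    induction q₁ using Quotient.inductionOn' with | h a =>
    induction q₂ using Quotient.inductionOn' with | h b =>
    intro hab
    have : ((a : G) : G ⧸ B) = ((b : G) : G ⧸ B) := congrArg Subtype.val hab
    apply Quotient.sound'
    rw [QuotientGroup.leftRel_apply, Subgroup.mem_subgroupOf]
    exact QuotientGroup.eq.mp this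
  · rintro ⟨-, a, ha, rfl⟩
    exact ⟨Quotient.mk'' ⟨a, ha⟩, rfl⟩

/-- Cardinality of a set product of two subgroups. -/
theorem card_set_mul (A B : Subgroup G) :
    Nat.card ((A : Set G) * (B : Set G)) = Nat.card B * B.relIndex A := by
  rw [Subgroup.card_mul_eq_card_subgroup_mul_card_quotient B (A : Set G), card_image_mk]

theorem card_of_le {X T : Subgroup G} (h : X ≤ T) :
    Nat.card T = Nat.card X * X.relIndex T := by
  rw [Subgroup.relIndex,
    show Nat.card X = Nat.card (X.subgroupOf T) from
      (Nat.card_congr (Subgroup.subgroupOfEquivOfLe h).toEquiv).symm]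
  exact (Subgroup.card_mul_index (X.subgroupOf T)).symm

theorem relindex_eq_of_mul_eq [Finite G] {X D T : Subgroup G} (hXT : X ≤ T)
    (hset : (X : Set G) * (D : Set G) = (T : Set G)) : X.relIndex D = X.relIndex T := by
  have hset' : (D : Set G) * (X : Set G) = (T : Set G) := by
    have := congrArg (fun s : Set G => s⁻¹) hset
    simpa [mul_inv_rev, inv_coe_set] using this
  have h1 : Nat.card ((D : Set G) * (X : Set G)) = Nat.card X * X.relIndex D :=
    card_set_mul D X
  rw [hset'] at h1
  have h2 : Nat.card ((T : Set G) : Set G) = Nat.card T := Nat.card_congr (Equiv.refl _)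
  have h3 : Nat.card X * X.relIndex D = Nat.card X * X.relIndex T := by
    rw [← h1, h2, card_of_le hXT]
  exact Nat.eq_of_mul_eq_mul_left Nat.card_pos h3

/-- Two subgroups with coprime indices cover the group. -/
theorem mul_eq_univ_of_coprime [Finite G] {A B : Subgroup G}
    (h : Nat.Coprime A.index B.index) : (A : Set G) * (B : Set G) = Set.univ := by
  have hdvd : B.index ∣ B.relIndex A * A.index := by
    have h1 : (A ⊓ B).relIndex A * A.index = (A ⊓ B).index :=
      Subgroup.relIndex_mul_index inf_le_left
    have h2 : B.index ∣ (A ⊓ B).index := Subgroup.index_dvd_of_le inf_le_right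
    rwa [← h1, Subgroup.inf_relIndex_left] at h2
  have hdvd2 : B.index ∣ B.relIndex A := (Nat.Coprime.dvd_of_dvd_mul_right h.symm) hdvd
  have hle : B.relIndex A ≤ B.index := by
    have hcard : Nat.card ((A : Set G) * (B : Set G)) ≤ Nat.card G := by
      rw [Nat.card_coe_set_eq, ← Set.ncard_univ G]
      exact Set.ncard_le_ncard (Set.subset_univ _) Set.finite_univ
    rw [card_set_mul, ← Subgroup.card_mul_index B] at hcard
    exact Nat.le_of_mul_le_mul_left hcard Nat.card_pos
  have heq : B.relIndex A = B.index := Nat.le_antisymm hle (Nat.le_of_dvd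
    (Nat.pos_of_ne_zero (by
      have : B.relIndex A ≠ 0 := Subgroup.index_ne_zero_of_finite (H := B.subgroupOf A)
      exact this)) hdvd2)
  have hcard : Nat.card ((A : Set G) * (B : Set G)) = Nat.card G := by
    rw [card_set_mul, heq, Subgroup.card_mul_index]
  apply Set.eq_of_subset_of_ncard_le (Set.subset_univ _)
  rw [Set.ncard_univ, ← Nat.card_coe_set_eq, hcard]

theorem mul_eq_of_coprime_relindex [Finite G] {A B D : Subgroup G} (hA : A ≤ D) (hB : B ≤ D)
    (h : Nat.Coprime (A.relIndex D) (B.relIndex D)) :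
    (A : Set G) * (B : Set G) = (D : Set G) := by
  have key : ((A.subgroupOf D : Subgroup D) : Set D) * ((B.subgroupOf D : Subgroup D) : Set D)
      = Set.univ := mul_eq_univ_of_coprime h
  have := congrArg (fun s : Set D => (D.subtype : D →* G) '' s) key
  simp only [Set.image_mul] at this
  rw [Set.image_univ] at this
  have hA' : (D.subtype : D →* G) '' (A.subgroupOf D : Set D) = (A : Set G) := by
    rw [← Subgroup.coe_map, Subgroup.subgroupOf_map_subtype, inf_of_le_left hA]
  have hB' : (D.subtype : D →* G) '' (B.subgroupOf D : Set D) = (B : Set G) := by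
    rw [← Subgroup.coe_map, Subgroup.subgroupOf_map_subtype, inf_of_le_left hB]
  have hrange : Set.range (D.subtype : D →* G) = (D : Set G) := by
    rw [← MonoidHom.coe_range, Subgroup.range_subtype]
  rw [hA', hB', hrange] at this
  exact this

end Helpers

set_option maxHeartbeats 1600000 in
/-- If H, K, N are pairwise permutable subgroups of a finite group G and H is a
Hall subgroup of G, then N ∩ HK = (N ∩ H)(N ∩ K). -/
theorem stmt_0 {G : Type*} [Group G] [Finite G] (H K N : Subgroup G)
    (hHK : (H : Set G) * (K : Set G) = (K : Set G) * (H : Set G))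
    (hHN : (H : Set G) * (N : Set G) = (N : Set G) * (H : Set G))
    (hKN : (K : Set G) * (N : Set G) = (N : Set G) * (K : Set G))
    (hHall : Nat.Coprime (Nat.card H) H.index) :
    (N : Set G) ∩ ((H : Set G) * (K : Set G)) =
      ((N ⊓ H : Subgroup G) : Set G) * ((N ⊓ K : Subgroup G) : Set G) := by
  set Q : Subgroup G := H ⊔ K with hQ
  set R : Subgroup G := H ⊔ N with hR
  set S : Subgroup G := K ⊔ N with hS
  have coeQ : (Q : Set G) = (H : Set G) * (K : Set G) := coe_sup_of_comm H K hHK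
  have coeR : (R : Set G) = (H : Set G) * (N : Set G) := coe_sup_of_comm H N hHN
  have coeS : (S : Set G) = (K : Set G) * (N : Set G) := coe_sup_of_comm K N hKN
  set D : Subgroup G := N ⊓ Q with hD
  have hHQ : H ≤ Q := le_sup_left
  have hHR : H ≤ R := le_sup_left
  have hNR : N ≤ R := le_sup_right
  have hKS : K ≤ S := le_sup_left
  have hNS : N ≤ S := le_sup_right
  have hDN : D ≤ N := inf_le_left
  have hDQ : D ≤ Q := inf_le_right
  have hKQ' : K ≤ Q := le_sup_right
  have hNH_D : N ⊓ H ≤ D := le_inf inf_le_left (inf_le_right.trans hHQ)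
  have hNK_D : N ⊓ K ≤ D := le_inf inf_le_left (inf_le_right.trans hKQ')
  -- (i) H * D = Q ⊓ R
  have hi : (H : Set G) * (D : Set G) = ((Q ⊓ R : Subgroup G) : Set G) := by
    apply Set.Subset.antisymm
    · rintro x ⟨h, hh, d, hd, rfl⟩
      exact ⟨mul_mem (hHQ hh) (hDQ hd), mul_mem (hHR hh) (hNR (hDN hd))⟩
    · rintro y ⟨hyQ, hyR⟩
      have : y ∈ (H : Set G) * (N : Set G) := by rw [← coeR]; exact hyR
      obtain ⟨h, hh, n, hn, rfl⟩ := this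
      have hnD : n ∈ D := by
        refine ⟨hn, ?_⟩
        have : h⁻¹ * (h * n) ∈ Q := mul_mem (inv_mem (hHQ hh)) hyQ
        simpa using this
      exact ⟨h, hh, n, hnD, rfl⟩
  -- (ii) K * D = Q ⊓ S
  have hii : (K : Set G) * (D : Set G) = ((Q ⊓ S : Subgroup G) : Set G) := by
    apply Set.Subset.antisymm
    · rintro x ⟨k, hk, d, hd, rfl⟩
      exact ⟨mul_mem (hKQ' hk) (hDQ hd), mul_mem (hKS hk) (hNS (hDN hd))⟩
    · rintro y ⟨hyQ, hyS⟩
      have : y ∈ (K : Set G) * (N : Set G) := by rw [← coeS]; exact hyS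
      obtain ⟨k, hk, n, hn, rfl⟩ := this
      have hnD : n ∈ D := by
        refine ⟨hn, ?_⟩
        have : k⁻¹ * (k * n) ∈ Q := mul_mem (inv_mem (hKQ' hk)) hyQ
        simpa using this
      exact ⟨k, hk, n, hnD, rfl⟩
  have r1 : H.relIndex D = H.relIndex (Q ⊓ R) :=
    relindex_eq_of_mul_eq (le_inf hHQ hHR) hi
  have r2 : K.relIndex D = K.relIndex (Q ⊓ S) :=
    relindex_eq_of_mul_eq (le_inf hKQ' hKS) hii
  -- c1 : H.relIndex D ∣ H.index
  have c1 : H.relIndex D ∣ H.index := by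
    rw [r1]; exact Subgroup.relIndex_dvd_index_of_le (le_inf hHQ hHR)
  -- c2 : K.relIndex D ∣ Nat.card H
  have c2 : K.relIndex D ∣ Nat.card H := by
    rw [r2]
    have hd1 : K.relIndex (Q ⊓ S) ∣ K.relIndex Q :=
      dvd_of_mul_right_eq _
        (Subgroup.relIndex_mul_relIndex K (Q ⊓ S) Q (le_inf hKQ' hKS) inf_le_left)
    have hQH : K.relIndex Q = K.relIndex H := by
      have e1 : Nat.card Q = Nat.card K * K.relIndex H := by
        have : Nat.card ((H : Set G) * (K : Set G)) = Nat.card K * K.relIndex H :=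
          card_set_mul H K
        rwa [← coeQ, show Nat.card ((Q : Set G) : Set G) = Nat.card Q from
          Nat.card_congr (Equiv.refl _)] at this
      have e2 : Nat.card Q = Nat.card K * K.relIndex Q := card_of_le hKQ'
      exact Nat.eq_of_mul_eq_mul_left Nat.card_pos (e2.symm.trans e1)
    exact hd1.trans (by rw [hQH]; exact Subgroup.index_dvd_card (K.subgroupOf H))
  -- switch to (N ⊓ H) and (N ⊓ K)
  have eNH : N ⊓ H = H ⊓ D := by
    apply le_antisymm
    · exact le_inf inf_le_right hNH_D
    · exact le_inf (inf_le_right.trans hDN) inf_le_left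
  have eNK : N ⊓ K = K ⊓ D := by
    apply le_antisymm
    · exact le_inf inf_le_right hNK_D
    · exact le_inf (inf_le_right.trans hDN) inf_le_left
  have rNH : (N ⊓ H).relIndex D = H.relIndex D := by
    rw [eNH, Subgroup.relIndex, Subgroup.inf_subgroupOf_right, ← Subgroup.relIndex]
  have rNK : (N ⊓ K).relIndex D = K.relIndex D := by
    rw [eNK, Subgroup.relIndex, Subgroup.inf_subgroupOf_right, ← Subgroup.relIndex]
  have hcop : Nat.Coprime ((N ⊓ H).relIndex D) ((N ⊓ K).relIndex D) := by
    rw [rNH, rNK]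
    exact (Nat.Coprime.coprime_dvd_left c1 hHall.symm).coprime_dvd_right c2
  have final : ((N ⊓ H : Subgroup G) : Set G) * ((N ⊓ K : Subgroup G) : Set G) = (D : Set G) :=
    mul_eq_of_coprime_relindex hNH_D hNK_D hcop
  rw [final, hD, Subgroup.coe_inf, coeQ]
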